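/- arXiv:2209.11114 — 2 statements merged into one kernel-verified Lean document; each statement's English description precedes it below -/
import Mathlib

section
/- For |q| < 1 and |z| < 1, the q-exponential e_q(z) = ∑_{n≥0} z^n/(q;q)_n equals 1/(z;q)_∞, where (z;q)_∞ = ∏_{k≥0}(1 - z q^k). -/
open Filter Topology

noncomputable section

/-- The q-Pochhammer symbol (a;q)_m = ∏_{j=0}^{m-1} (1 - a q^j). -/
def qPoch (a q : ℂ) (m : ℕ) : ℂ := ∏ j ∈ Finset.range m, (1 - a * q ^ j)

lemma factor_ne_zero {w q : ℂ} (hq : ‖q‖ ≤ 1) (hw : ‖w‖ < 1) (k : ℕ) :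
    1 - w * q ^ k ≠ 0 := by
  intro h
  have h1 : w * q ^ k = 1 := by linear_combination -h
  have : ‖w * q ^ k‖ < 1 := by
    calc ‖w * q ^ k‖ = ‖w‖ * ‖q‖ ^ k := by simp [norm_pow]
    _ ≤ ‖w‖ * 1 := by
        apply mul_le_mul_of_nonneg_left _ (norm_nonneg w)
        exact pow_le_one₀ (norm_nonneg q) hq
    _ < 1 := by simpa using hw
  rw [h1] at this; simp at this

lemma summable_log {q w : ℂ} (hq : ‖q‖ < 1) (hw : ‖w‖ < 1) :
    Summable fun n : ℕ => Complex.log (1 - w * q ^ n) := by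
  have hgeo : Summable fun n : ℕ => 3 / 2 * (‖w‖ * ‖q‖ ^ n) :=
    ((summable_geometric_of_lt_one (norm_nonneg q) hq).mul_left ‖w‖).mul_left _
  apply Summable.of_norm_bounded_eventually_nat hgeo
  have h0 : Tendsto (fun n : ℕ => ‖w‖ * ‖q‖ ^ n) atTop (nhds 0) := by
    simpa using (tendsto_pow_atTop_nhds_zero_of_lt_one (norm_nonneg q) hq).const_mul ‖w‖
  filter_upwards [h0.eventually_le_const (by norm_num : (0:ℝ) < 1/2)] with n hn
  have hb : ‖-(w * q ^ n)‖ ≤ 1 / 2 := by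
    rw [norm_neg]
    calc ‖w * q ^ n‖ = ‖w‖ * ‖q‖ ^ n := by simp [norm_pow]
    _ ≤ 1 / 2 := hn
  have := Complex.norm_log_one_add_half_le_self hb
  rw [show (1 : ℂ) + -(w * q ^ n) = 1 - w * q ^ n by ring] at this
  calc ‖Complex.log (1 - w * q ^ n)‖ ≤ 3 / 2 * ‖-(w * q ^ n)‖ := this
  _ = 3 / 2 * (‖w‖ * ‖q‖ ^ n) := by rw [norm_neg]; simp [norm_pow]

lemma hasProd_one_sub {q w : ℂ} (hq : ‖q‖ < 1) (hw : ‖w‖ < 1) :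
    HasProd (fun k : ℕ => 1 - w * q ^ k) (∏' k : ℕ, (1 - w * q ^ k)) ∧
      (∏' k : ℕ, (1 - w * q ^ k)) ≠ 0 := by
  have hfn : ∀ (_ : Unit) (n : ℕ), (fun (n : ℕ) (_ : Unit) => 1 - w * q ^ n) n () ≠ 0 :=
    fun _ n => factor_ne_zero hq.le hw n
  have hf : ∀ _ : Unit, Summable fun n : ℕ =>
      Complex.log ((fun (n : ℕ) (_ : Unit) => 1 - w * q ^ n) n ()) :=
    fun _ => summable_log hq hw
  constructor
  · exact (Complex.hasProd_of_hasSum_log (f := fun n => 1 - w * q ^ n)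
      (fun n => factor_ne_zero hq.le hw n) (summable_log hq hw).hasSum).multipliable.hasProd
  · have := Complex.cexp_tsum_eq_tprod (f := fun n => 1 - w * q ^ n)
      (fun n => factor_ne_zero hq.le hw n) (summable_log hq hw)
    rw [← this]
    exact Complex.exp_ne_zero _

lemma exists_pos_le_norm {g : ℕ → ℝ} (hpos : ∀ n, 0 < g n) {L : ℝ} (hL : 0 < L)
    (h : Tendsto g atTop (nhds L)) : ∃ c, 0 < c ∧ ∀ n, c ≤ g n := by
  obtain ⟨N, hN⟩ := (h.eventually (lt_mem_nhds (half_lt_self hL))).exists_forall_of_atTop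
  have hne : (Finset.range (N + 1)).Nonempty := Finset.nonempty_range_add_one
  refine ⟨min (L / 2) ((Finset.range (N + 1)).inf' hne g), ?_, ?_⟩
  · apply lt_min (half_pos hL)
    obtain ⟨i, _, hi⟩ := Finset.exists_mem_eq_inf' hne g
    rw [hi]; exact hpos i
  · intro n
    rcases lt_or_ge n (N + 1) with hn | hn
    · exact le_trans (min_le_right _ _) (Finset.inf'_le g (Finset.mem_range.2 hn))
    · exact le_trans (min_le_left _ _) (hN n (by omega)).le


/-- For |q| < 1 and |z| < 1, e_q(z) = ∑_{n≥0} z^n/(q;q)_n = 1/(z;q)_∞. -/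
theorem stmt1 (q z : ℂ) (hq : ‖q‖ < 1) (hz : ‖z‖ < 1) :
    ∑' n : ℕ, z ^ n / qPoch q q n = (∏' k : ℕ, (1 - z * q ^ k))⁻¹ := by
  have hq1 : ‖q‖ ≤ 1 := hq.le
  have hpochne : ∀ n, qPoch q q n ≠ 0 := fun n =>
    Finset.prod_ne_zero_iff.2 fun j _ => factor_ne_zero hq1 hq j
  -- lower bound on ‖qPoch q q n‖
  have htend : Tendsto (fun n => ‖qPoch q q n‖) atTop
      (nhds ‖∏' k : ℕ, (1 - q * q ^ k)‖) :=
    ((hasProd_one_sub hq hq).1.tendsto_prod_nat).norm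
  obtain ⟨c, hc, hcle⟩ := exists_pos_le_norm
    (fun n => norm_pos_iff.2 (hpochne n)) (norm_pos_iff.2 (hasProd_one_sub hq hq).2) htend
  -- summability of the series for any ‖w‖ < 1
  have hsum : ∀ w : ℂ, ‖w‖ < 1 → Summable fun n : ℕ => w ^ n / qPoch q q n := by
    intro w hw
    apply Summable.of_norm_bounded
      ((summable_geometric_of_lt_one (norm_nonneg w) hw).div_const c)
    intro n
    rw [norm_div, norm_pow]
    exact div_le_div_of_nonneg_left (pow_nonneg (norm_nonneg w) n) hc (hcle n)
  -- functional equation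
  have hfe : ∀ w : ℂ, ‖w‖ < 1 →
      (1 - w) * ∑' n : ℕ, w ^ n / qPoch q q n = ∑' n : ℕ, (q * w) ^ n / qPoch q q n := by
    intro w hw
    have hqw : ‖q * w‖ < 1 := by
      calc ‖q * w‖ = ‖q‖ * ‖w‖ := norm_mul q w
      _ ≤ 1 * ‖w‖ := mul_le_mul_of_nonneg_right hq1 (norm_nonneg w)
      _ < 1 := by simpa using hw
    have hf := hsum w hw
    have hg := hsum (q * w) hqw
    set f : ℕ → ℂ := fun n => w ^ n / qPoch q q n with hfdef
    set g : ℕ → ℂ := fun n => (q * w) ^ n / qPoch q q n with hgdef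
    have hsub : Summable fun n => f n - g n := hf.sub hg
    have key : ∑' n, (f n - g n) = w * ∑' n, f n := by
      rw [hsub.tsum_eq_zero_add]
      have h0 : f 0 - g 0 = 0 := by simp [hfdef, hgdef]
      have hstep : ∀ n : ℕ, f (n + 1) - g (n + 1) = w * f n := by
        intro n
        have hps : qPoch q q (n + 1) = qPoch q q n * (1 - q * q ^ n) :=
          Finset.prod_range_succ _ _
        have hne : (1 - q * q ^ n) ≠ 0 := factor_ne_zero hq1 hq n
        have e1 : f (n + 1) - g (n + 1)
            = (w ^ (n + 1) * (1 - q * q ^ n)) / (qPoch q q n * (1 - q * q ^ n)) := by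
          simp only [hfdef, hgdef, hps]
          rw [div_sub_div_same]
          congr 1
          rw [mul_pow]
          ring
        rw [e1, mul_div_mul_right _ _ hne, pow_succ', mul_div_assoc]
      rw [h0, zero_add]
      calc ∑' n, (f (n + 1) - g (n + 1)) = ∑' n, w * f n := by
            exact tsum_congr hstep
      _ = w * ∑' n, f n := tsum_mul_left
    have := hf.tsum_sub hg
    rw [key] at this
    linear_combination -this
  -- iterate: F z * qPoch z q N = F (q^N z)
  have hqn : ∀ N : ℕ, ‖q ^ N * z‖ < 1 := by
    intro N
    calc ‖q ^ N * z‖ = ‖q‖ ^ N * ‖z‖ := by simp [norm_pow]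
    _ ≤ 1 * ‖z‖ := mul_le_mul_of_nonneg_right (pow_le_one₀ (norm_nonneg q) hq1) (norm_nonneg z)
    _ < 1 := by simpa using hz
  have hiter : ∀ N : ℕ,
      (∑' n : ℕ, z ^ n / qPoch q q n) * qPoch z q N
        = ∑' n : ℕ, (q ^ N * z) ^ n / qPoch q q n := by
    intro N
    induction N with
    | zero => simp [qPoch]
    | succ N ih =>
      have hps : qPoch z q (N + 1) = qPoch z q N * (1 - z * q ^ N) :=
        Finset.prod_range_succ _ _
      have := hfe (q ^ N * z) (hqn N)
      rw [hps, ← mul_assoc, ih]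
      calc (∑' n : ℕ, (q ^ N * z) ^ n / qPoch q q n) * (1 - z * q ^ N)
          = (1 - q ^ N * z) * ∑' n : ℕ, (q ^ N * z) ^ n / qPoch q q n := by ring
      _ = ∑' n : ℕ, (q * (q ^ N * z)) ^ n / qPoch q q n := this
      _ = ∑' n : ℕ, (q ^ (N + 1) * z) ^ n / qPoch q q n := by
            congr 1; ext n; ring_nf
  -- limit of RHS: F (q^N z) → 1
  have hlim1 : Tendsto (fun N => ∑' n : ℕ, (q ^ N * z) ^ n / qPoch q q n) atTop (nhds 1) := by
    rw [tendsto_iff_norm_sub_tendsto_zero]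
    apply squeeze_zero (fun N => norm_nonneg _)
      (g := fun N => (‖z‖ / c * (1 - ‖z‖)⁻¹) * ‖q‖ ^ N)
    · intro N
      set w := q ^ N * z with hwdef
      have hw : ‖w‖ < 1 := hqn N
      have hwz : ‖w‖ ≤ ‖q‖ ^ N * ‖z‖ := by rw [hwdef]; simp [norm_pow]
      have hwz' : ‖w‖ ≤ ‖z‖ := by
        refine hwz.trans ?_
        calc ‖q‖ ^ N * ‖z‖ ≤ 1 * ‖z‖ :=
              mul_le_mul_of_nonneg_right (pow_le_one₀ (norm_nonneg q) hq1) (norm_nonneg z)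
        _ = ‖z‖ := one_mul _
      have hsw := hsum w hw
      have hsplit : (∑' n : ℕ, w ^ n / qPoch q q n) - 1
          = ∑' n : ℕ, w ^ (n + 1) / qPoch q q (n + 1) := by
        rw [hsw.tsum_eq_zero_add]
        simp [qPoch]
      rw [hsplit]
      have hbound : ∀ n : ℕ, ‖w ^ (n + 1) / qPoch q q (n + 1)‖ ≤ ‖w‖ / c * ‖z‖ ^ n := by
        intro n
        rw [norm_div, norm_pow]
        calc ‖w‖ ^ (n + 1) / ‖qPoch q q (n + 1)‖ ≤ ‖w‖ ^ (n + 1) / c :=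
              div_le_div_of_nonneg_left (pow_nonneg (norm_nonneg w) _) hc (hcle _)
        _ = ‖w‖ / c * ‖w‖ ^ n := by ring
        _ ≤ ‖w‖ / c * ‖z‖ ^ n := by
              apply mul_le_mul_of_nonneg_left _ (div_nonneg (norm_nonneg w) hc.le)
              exact pow_le_pow_left₀ (norm_nonneg w) hwz' n
      have hgeo : HasSum (fun n : ℕ => ‖w‖ / c * ‖z‖ ^ n) (‖w‖ / c * (1 - ‖z‖)⁻¹) :=
        (hasSum_geometric_of_lt_one (norm_nonneg z) hz).mul_left _
      calc ‖∑' n : ℕ, w ^ (n + 1) / qPoch q q (n + 1)‖ ≤ ‖w‖ / c * (1 - ‖z‖)⁻¹ :=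
            tsum_of_norm_bounded hgeo hbound
      _ ≤ (‖q‖ ^ N * ‖z‖) / c * (1 - ‖z‖)⁻¹ := by
            gcongr
      _ = ‖z‖ / c * (1 - ‖z‖)⁻¹ * ‖q‖ ^ N := by ring
    · simpa using (tendsto_pow_atTop_nhds_zero_of_lt_one (norm_nonneg q) hq).const_mul
        (‖z‖ / c * (1 - ‖z‖)⁻¹)
  -- limit of LHS: F z * qPoch z q N → F z * P
  have hlim2 : Tendsto (fun N => (∑' n : ℕ, z ^ n / qPoch q q n) * qPoch z q N) atTop
      (nhds ((∑' n : ℕ, z ^ n / qPoch q q n) * ∏' k : ℕ, (1 - z * q ^ k))) :=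
    ((hasProd_one_sub hq hz).1.tendsto_prod_nat).const_mul _
  have heq : (∑' n : ℕ, z ^ n / qPoch q q n) * (∏' k : ℕ, (1 - z * q ^ k)) = 1 := by
    apply tendsto_nhds_unique _ hlim1
    exact (funext hiter : _) ▸ hlim2
  exact eq_inv_of_mul_eq_one_left heq
end
end

section
/- For |q| < 1 and any complex z, the q-exponential E_q(z) = ∑_{n≥0} q^{n(n-1)/2} z^n/(q;q)_n equals (-z;q)_∞ = ∏_{k≥0}(1 + z q^k). -/
noncomputable section

namespace QExpAux

/-- coefficient of the q-exponential -/
def A (q : ℂ) (n : ℕ) : ℂ := q ^ (n * (n - 1) / 2) / qPoch q q n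

lemma qPoch_ne (q : ℂ) (hq : ‖q‖ < 1) (n : ℕ) : qPoch q q n ≠ 0 := by
  rw [qPoch, Finset.prod_ne_zero_iff]
  intro j _
  rw [sub_ne_zero]
  intro h
  have h1 : ‖q * q ^ j‖ < 1 := by
    rw [norm_mul, norm_pow]
    have h2 : ‖q‖ ^ j ≤ 1 := pow_le_one₀ (norm_nonneg _) hq.le
    nlinarith [norm_nonneg q]
  rw [← h, norm_one] at h1
  exact lt_irrefl _ h1

lemma tri_succ (n : ℕ) : (n + 1) * ((n + 1) - 1) / 2 = n * (n - 1) / 2 + n := by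
  have h : (n + 1) * ((n + 1) - 1) = n * (n - 1) + n * 2 := by
    cases n with
    | zero => simp
    | succ m => simp [Nat.succ_sub_one]; ring
  rw [h, Nat.add_mul_div_right _ _ (by norm_num : (0:ℕ) < 2)]

lemma A_zero (q : ℂ) : A q 0 = 1 := by simp [A, qPoch]

lemma A_rec (q : ℂ) (hq : ‖q‖ < 1) (n : ℕ) :
    A q (n + 1) * (1 - q * q ^ n) = q ^ n * A q n := by
  have hp := qPoch_ne q hq n
  have hf : (1 : ℂ) - q * q ^ n ≠ 0 := by
    have := qPoch_ne q hq (n + 1)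
    rw [qPoch, Finset.prod_range_succ, ← qPoch, mul_ne_zero_iff] at this
    exact this.2
  rw [A, A, qPoch, Finset.prod_range_succ, ← qPoch, tri_succ, pow_add]
  rw [div_mul_eq_mul_div, mul_div_mul_right _ _ hf]
  ring

lemma norm_one_sub_qpow (q : ℂ) (hq : ‖q‖ < 1) (n : ℕ) :
    1 - ‖q‖ ≤ ‖(1 : ℂ) - q * q ^ n‖ := by
  have h1 : ‖q * q ^ n‖ ≤ ‖q‖ := by
    rw [norm_mul, norm_pow]
    have h2 : ‖q‖ ^ n ≤ 1 := pow_le_one₀ (norm_nonneg _) hq.le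
    nlinarith [norm_nonneg q]
  have h3 := norm_sub_norm_le (1 : ℂ) (q * q ^ n)
  rw [norm_one] at h3
  linarith

lemma summable_norm_A (q : ℂ) (hq : ‖q‖ < 1) (w : ℂ) :
    Summable (fun n => ‖A q n * w ^ n‖) := by
  apply summable_of_ratio_norm_eventually_le (r := 1/2) (by norm_num)
  have hc : (0:ℝ) < 1 - ‖q‖ := by linarith
  have htend : Filter.Tendsto (fun n : ℕ => ‖q‖ ^ n * ‖w‖) Filter.atTop (nhds 0) := by
    simpa using (tendsto_pow_atTop_nhds_zero_of_lt_one (norm_nonneg q) hq).mul_const ‖w‖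
  filter_upwards [htend.eventually_le_const (by linarith : (0:ℝ) < (1 - ‖q‖)/2)]
    with n hn
  rw [norm_norm, norm_norm]
  have hf : (1 : ℂ) - q * q ^ n ≠ 0 := by
    have := qPoch_ne q hq (n + 1)
    rw [qPoch, Finset.prod_range_succ, ← qPoch, mul_ne_zero_iff] at this
    exact this.2
  have hA1 : A q (n + 1) = q ^ n * A q n / (1 - q * q ^ n) := by
    rw [eq_div_iff hf]; exact A_rec q hq n
  rw [hA1]
  rw [pow_succ]
  have hnorm : ‖q ^ n * A q n / (1 - q * q ^ n) * (w ^ n * w)‖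
      = (‖q‖ ^ n * ‖w‖ / ‖(1:ℂ) - q * q ^ n‖) * ‖A q n * w ^ n‖ := by
    simp [norm_mul, norm_div, norm_pow]
    ring
  rw [hnorm]
  apply mul_le_mul_of_nonneg_right _ (norm_nonneg _)
  rw [div_le_iff₀ (norm_pos_iff.mpr hf)]
  calc ‖q‖ ^ n * ‖w‖ ≤ (1 - ‖q‖)/2 := hn
    _ ≤ 1/2 * ‖(1:ℂ) - q * q ^ n‖ := by
        have := norm_one_sub_qpow q hq n
        linarith

lemma summable_A (q : ℂ) (hq : ‖q‖ < 1) (w : ℂ) :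
    Summable (fun n => A q n * w ^ n) :=
  Summable.of_norm (summable_norm_A q hq w)

set_option maxHeartbeats 1000000 in
lemma funeq (q : ℂ) (hq : ‖q‖ < 1) (w : ℂ) :
    ∑' n : ℕ, A q n * w ^ n = (1 + w) * ∑' n : ℕ, A q n * (q * w) ^ n := by
  have S1 := summable_A q hq w
  have Sq := summable_A q hq (q * w)
  have hterm : ∀ n : ℕ, A q (n + 1) * w ^ (n + 1)
      = A q (n + 1) * (q * w) ^ (n + 1) + (A q n * (q * w) ^ n) * w := by
    intro n
    have h := A_rec q hq n
    linear_combination w ^ (n + 1) * h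
  have hs1 : Summable (fun n => A q (n + 1) * (q * w) ^ (n + 1)) :=
    (summable_nat_add_iff 1).2 Sq
  have hs2 : Summable (fun n => (A q n * (q * w) ^ n) * w) := Sq.mul_right w
  calc ∑' n : ℕ, A q n * w ^ n
      = A q 0 * w ^ 0 + ∑' n : ℕ, A q (n + 1) * w ^ (n + 1) := by
        rw [S1.tsum_eq_zero_add]
    _ = 1 + (∑' n : ℕ, (A q (n + 1) * (q * w) ^ (n + 1) + (A q n * (q * w) ^ n) * w)) := by
        rw [A_zero]
        simp only [pow_zero, mul_one]
        congr 1
        exact tsum_congr hterm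
    _ = 1 + ((∑' n : ℕ, A q (n + 1) * (q * w) ^ (n + 1)) + (∑' n : ℕ, A q n * (q * w) ^ n) * w) := by
        rw [hs1.tsum_add hs2, tsum_mul_right]
    _ = (1 + w) * ∑' n : ℕ, A q n * (q * w) ^ n := by
        rw [Sq.tsum_eq_zero_add, A_zero]
        ring

lemma iter (q z : ℂ) (hq : ‖q‖ < 1) (N : ℕ) :
    ∑' n : ℕ, A q n * z ^ n
      = (∏ k ∈ Finset.range N, (1 + z * q ^ k)) * ∑' n : ℕ, A q n * (q ^ N * z) ^ n := by
  induction N with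
  | zero => simp
  | succ N ih =>
    rw [ih, Finset.prod_range_succ, funeq q hq (q ^ N * z)]
    simp only [show q * (q ^ N * z) = q ^ (N + 1) * z from by ring]
    ring

lemma tail_tendsto (q z : ℂ) (hq : ‖q‖ < 1) :
    Filter.Tendsto (fun N : ℕ => ∑' n : ℕ, A q n * (q ^ N * z) ^ n) Filter.atTop (nhds 1) := by
  have h := tendsto_tsum_of_dominated_convergence (𝓕 := Filter.atTop (α := ℕ))
    (f := fun N n => A q n * (q ^ N * z) ^ n)
    (g := fun n => if n = 0 then (1 : ℂ) else 0)
    (bound := fun n => ‖A q n * z ^ n‖)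
    (summable_norm_A q hq z) ?_ ?_
  · have hg : ∑' n : ℕ, (if n = 0 then (1 : ℂ) else 0) = 1 := tsum_ite_eq 0 1
    rwa [hg] at h
  · intro n
    match n with
    | 0 => simp only [pow_zero, mul_one, if_pos rfl, A_zero]; exact tendsto_const_nhds (x := (1:ℂ)) (f := Filter.atTop (α := ℕ))
    | (m + 1) =>
      have hrw : ∀ N : ℕ, A q (m + 1) * (q ^ N * z) ^ (m + 1)
          = (A q (m + 1) * z ^ (m + 1)) * (q ^ (m + 1)) ^ N := by
        intro N
        rw [mul_pow, ← pow_mul, ← pow_mul, Nat.mul_comm]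
        ring
      simp only [hrw, if_neg (Nat.succ_ne_zero m)]
      have hlt : ‖q ^ (m + 1)‖ < 1 := by
        rw [norm_pow]
        exact pow_lt_one₀ (norm_nonneg q) hq (Nat.succ_ne_zero m)
      simpa using (tendsto_pow_atTop_nhds_zero_of_norm_lt_one hlt).const_mul
        (A q (m + 1) * z ^ (m + 1))
  · filter_upwards with N n
    rw [norm_mul, norm_mul, norm_pow, norm_pow, norm_mul, norm_pow]
    apply mul_le_mul_of_nonneg_left _ (norm_nonneg _)
    apply pow_le_pow_left₀ (by positivity)
    have : ‖q‖ ^ N ≤ 1 := pow_le_one₀ (norm_nonneg q) hq.le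
    nlinarith [norm_nonneg z]

end QExpAux

/-- For |q| < 1 and any z, E_q(z) = ∑_{n≥0} q^{n(n-1)/2} z^n/(q;q)_n = (-z;q)_∞. -/
theorem stmt2 (q z : ℂ) (hq : ‖q‖ < 1) :
    ∑' n : ℕ, q ^ (n * (n - 1) / 2) * z ^ n / qPoch q q n
      = ∏' k : ℕ, (1 + z * q ^ k) := by
  have hrw : ∀ n : ℕ, q ^ (n * (n - 1) / 2) * z ^ n / qPoch q q n = QExpAux.A q n * z ^ n := by
    intro n
    rw [QExpAux.A]
    ring
  rw [tsum_congr hrw]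
  by_cases hz : ∀ k : ℕ, (1 : ℂ) + z * q ^ k ≠ 0
  · have hlog : Summable (fun k : ℕ => Complex.log (1 + z * q ^ k)) := by
      obtain ⟨K, hK⟩ : ∃ K : ℕ, ∀ k ≥ K, ‖z * q ^ k‖ ≤ 1 / 2 := by
        have ht : Filter.Tendsto (fun k : ℕ => ‖z‖ * ‖q‖ ^ k) Filter.atTop (nhds 0) := by
          simpa using (tendsto_pow_atTop_nhds_zero_of_lt_one (norm_nonneg q) hq).const_mul ‖z‖
        have := ht.eventually_le_const (by norm_num : (0:ℝ) < 1/2)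
        rw [Filter.eventually_atTop] at this
        obtain ⟨K, hK⟩ := this
        exact ⟨K, fun k hk => by simpa [norm_mul, norm_pow] using hK k hk⟩
      rw [← summable_nat_add_iff K]
      apply Summable.of_norm_bounded (g := fun k => 3 / 2 * (‖z‖ * ‖q‖ ^ K) * ‖q‖ ^ k)
        (((summable_geometric_of_lt_one (norm_nonneg q) hq).mul_left _))
      intro k
      have h1 : ‖z * q ^ (k + K)‖ ≤ 1 / 2 := hK _ (Nat.le_add_left K k)
      calc ‖Complex.log (1 + z * q ^ (k + K))‖ ≤ 3 / 2 * ‖z * q ^ (k + K)‖ :=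
            Complex.norm_log_one_add_half_le_self h1
        _ = 3 / 2 * (‖z‖ * ‖q‖ ^ K) * ‖q‖ ^ k := by
            rw [norm_mul, norm_pow, pow_add]
            ring
    have hmult : Multipliable (fun k : ℕ => (1 : ℂ) + z * q ^ k) :=
      Complex.multipliable_of_summable_log hlog
    have hprod := hmult.hasProd.tendsto_prod_nat
    have htail := QExpAux.tail_tendsto q z hq
    have hconst : Filter.Tendsto
        (fun N : ℕ => (∏ k ∈ Finset.range N, (1 + z * q ^ k))
          * ∑' n : ℕ, QExpAux.A q n * (q ^ N * z) ^ n)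
        Filter.atTop (nhds (∑' n : ℕ, QExpAux.A q n * z ^ n)) :=
      Filter.Tendsto.congr (fun N => QExpAux.iter q z hq N) tendsto_const_nhds
    have hlim := hprod.mul htail
    rw [mul_one] at hlim
    exact tendsto_nhds_unique hconst hlim
  · push_neg at hz
    obtain ⟨k, hk⟩ := hz
    have h0 : HasProd (fun k : ℕ => (1 : ℂ) + z * q ^ k) 0 := by
      rw [HasProd]
      have hev : ∀ᶠ s : Finset ℕ in Filter.atTop,
          ∏ i ∈ s, ((1 : ℂ) + z * q ^ i) = 0 := by
        filter_upwards [Filter.eventually_ge_atTop ({k} : Finset ℕ)] with s hs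
        exact Finset.prod_eq_zero (hs (Finset.mem_singleton_self k)) hk
      exact Filter.Tendsto.congr' (hev.mono fun s h => h.symm) tendsto_const_nhds
    rw [h0.tprod_eq, QExpAux.iter q z hq (k + 1),
      Finset.prod_eq_zero (Finset.self_mem_range_succ k) hk, zero_mul]
end
end
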